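/- Weak stability consequence (Lemma 5.2 mechanism): let Σ(t) be a CMC surface with lapse ρ_t and Jacobi operator L_t satisfying dH_t/dt = L_t ρ_t, H_t constant on Σ(t), and the weak stability estimate -∫(ψ L_t ψ) ≥ λ∫ψ² for all zero-average ψ. Then ∫ (Ric(ν_t,ν_t) + |A|²) ρ_t dσ ≥ (λ/ρ̄_t)∫(ρ_t - ρ̄_t)² dσ + ρ̄_t ∫(Ric(ν_t,ν_t) + |A|²) dσ, where ρ̄_t > 0 is the average of ρ_t. -/

import Mathlib

open MeasureTheory

/-- Lemma 5.2 mechanism: let `Σ(t)` be a CMC surface (area measure `μ`)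
with positive lapse `ρ` of average `ρ̄ > 0`, potential `V = Ric(ν,ν) + |A|²` and Jacobi
operator `L` satisfying `dH/dt = Lρ` with `dH/dt` constant on `Σ(t)` (`hLρ`), the
linearity relation `L(ρ - c) = Lρ - cV` (`hLshift`), and the weak stability estimate
`-∫ ψ Lψ ≥ λ ∫ ψ²` for all zero-average `ψ`. Then
`∫ V ρ ≥ (λ/ρ̄) ∫ (ρ - ρ̄)² + ρ̄ ∫ V`. -/
theorem weak_stability_consequence
    {S : Type*} [MeasurableSpace S] (μ : Measure S) [IsFiniteMeasure μ]
    (A : ℝ) (hA : A = (μ Set.univ).toReal) (hApos : 0 < A)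
    (L : (S → ℝ) → (S → ℝ))
    (V ρ : S → ℝ) (lam dH ρbar : ℝ)
    (hρbar : ρbar = (∫ x, ρ x ∂μ) / A) (hρbarpos : 0 < ρbar)
    (hintρ : Integrable ρ μ) (hintV : Integrable V μ)
    (hintVρ : Integrable (fun x => V x * ρ x) μ)
    (hintsq : Integrable (fun x => (ρ x - ρbar) ^ 2) μ)
    (hintLψ : Integrable (fun x => (ρ x - ρbar) * L (fun y => ρ y - ρbar) x) μ)
    (hLρ : ∀ x, L ρ x = dH)
    (hLshift : ∀ (c : ℝ) (x : S), L (fun y => ρ y - c) x = L ρ x - c * V x)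
    (hstab : ∀ ψ : S → ℝ, (∫ x, ψ x ∂μ) = 0 →
      lam * (∫ x, (ψ x) ^ 2 ∂μ) ≤ -(∫ x, ψ x * L ψ x ∂μ)) :
    (∫ x, V x * ρ x ∂μ) ≥
      (lam / ρbar) * (∫ x, (ρ x - ρbar) ^ 2 ∂μ) + ρbar * (∫ x, V x ∂μ) := by
  set ψ : S → ℝ := fun y => ρ y - ρbar with hψ
  have hψ0 : (∫ x, ψ x ∂μ) = 0 := by
    have : (∫ x, ψ x ∂μ) = (∫ x, ρ x ∂μ) - ρbar * A := by
      rw [integral_sub hintρ (integrable_const _), integral_const, smul_eq_mul, hA,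
        mul_comm]
      rfl
    rw [this, hρbar]
    field_simp
    ring
  have hLψ : ∀ x, L ψ x = dH - ρbar * V x := fun x => by
    rw [hψ, hLshift ρbar x, hLρ x]
  -- ∫ ψ V
  have hψV : Integrable (fun x => ψ x * V x) μ := by
    have : (fun x => ψ x * V x) = fun x => V x * ρ x - ρbar * V x := by
      funext x; ring
    rw [this]
    exact hintVρ.sub (hintV.const_mul ρbar)
  have hψVval : (∫ x, ψ x * V x ∂μ) = (∫ x, V x * ρ x ∂μ) - ρbar * (∫ x, V x ∂μ) := by
    have : (fun x => ψ x * V x) = fun x => V x * ρ x - ρbar * V x := by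
      funext x; ring
    rw [this, integral_sub hintVρ (hintV.const_mul ρbar), integral_const_mul]
  have hintψ : Integrable ψ μ := by
    exact hintρ.sub (integrable_const ρbar)
  have hint2 : (∫ x, ψ x * L ψ x ∂μ) = -(ρbar * (∫ x, ψ x * V x ∂μ)) := by
    have h1 : (∫ x, ψ x * L ψ x ∂μ) = ∫ x, (dH * ψ x - ρbar * (ψ x * V x)) ∂μ := by
      apply integral_congr_ae
      filter_upwards with x
      rw [hLψ x]; ring
    rw [h1, integral_sub (hintψ.const_mul dH)
      (hψV.const_mul ρbar), integral_const_mul, integral_const_mul]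
    have : (∫ x, ψ x ∂μ) = 0 := hψ0
    rw [this]; ring
  have hkey := hstab ψ hψ0
  rw [hint2, neg_neg, hψVval] at hkey
  have h3 : lam * (∫ x, ψ x ^ 2 ∂μ) / ρbar ≤ (∫ x, V x * ρ x ∂μ) - ρbar * (∫ x, V x ∂μ) := by
    rw [div_le_iff₀ hρbarpos] at *
    nlinarith
  have : (∫ x, ψ x ^ 2 ∂μ) = (∫ x, (ρ x - ρbar) ^ 2 ∂μ) := rfl
  rw [this] at h3
  linarith [h3, (by ring : lam * (∫ x, (ρ x - ρbar) ^ 2 ∂μ) / ρbar = (lam / ρbar) * (∫ x, (ρ x - ρbar) ^ 2 ∂μ))]
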